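/- Let f_p(α, v) = k_a|v|(c̄_L(α) S + c̄_D(α) I) v be the transformed aerodynamic force expressed in body coordinates with v = v_a written via v₁ = −|v| cos(α+δ), v₂ = |v| sin(α+δ), and with c̄_L(α) = c_L(α) − λ(α) sin(α+δ), c̄_D(α) = c_D(α) + λ(α) cos(α+δ), λ = c_L' cos(α+δ) + c_D' sin(α+δ). Then e₂ᵀ ∂_α f_p ≡ 0: the second body-frame component of the partial derivative of f_p with respect to α is identically zero. -/

import Mathlib

open Real Matrix

/-- Rotation by π/2. -/
noncomputable def Srot : Matrix (Fin 2) (Fin 2) ℝ := !![0, -1; 1, 0]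

/-- Computational core of Theorem 3 i) (Eq. (propfpB2)): the second body-frame
component of `∂_α f_p` vanishes identically, where
`∂_α f_p = k_a |v| (c̄_L' S − c̄_D' I) v`, the body-frame air velocity is
`v = (−r cos(α+δ), r sin(α+δ))`, and `c̄_L, c̄_D, λ` are as in the spherical
equivalency. -/
theorem second_component_partial_fp_zero
    (cL cD : ℝ → ℝ) (hcL : ContDiff ℝ 2 cL) (hcD : ContDiff ℝ 2 cD)
    (δ kₐ r : ℝ) (hk : 0 < kₐ) (hr : 0 ≤ r) :
    let lam : ℝ → ℝ := fun α =>
      deriv cL α * cos (α + δ) + deriv cD α * sin (α + δ)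
    let cLbar : ℝ → ℝ := fun α => cL α - lam α * sin (α + δ)
    let cDbar : ℝ → ℝ := fun α => cD α + lam α * cos (α + δ)
    let v : ℝ → Fin 2 → ℝ := fun α => ![-(r * cos (α + δ)), r * sin (α + δ)]
    ∀ α, (![0, 1] : Fin 2 → ℝ) ⬝ᵥ
      ((kₐ * r) • (deriv cLbar α • Srot.mulVec (v α)
        - deriv cDbar α • v α)) = 0 := by
  intro lam cLbar cDbar v α
  -- derivatives of cL, cD
  have hdL : Differentiable ℝ (deriv cL) :=
    (hcL.iterate_deriv' 1 1).differentiable (by norm_num)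
  have hdD : Differentiable ℝ (deriv cD) :=
    (hcD.iterate_deriv' 1 1).differentiable (by norm_num)
  have hcL1 : HasDerivAt cL (deriv cL α) α :=
    ((hcL.differentiable (by norm_num)) α).hasDerivAt
  have hcD1 : HasDerivAt cD (deriv cD α) α :=
    ((hcD.differentiable (by norm_num)) α).hasDerivAt
  have hcL2 : HasDerivAt (deriv cL) (deriv (deriv cL) α) α := (hdL α).hasDerivAt
  have hcD2 : HasDerivAt (deriv cD) (deriv (deriv cD) α) α := (hdD α).hasDerivAt
  have hcos : HasDerivAt (fun α : ℝ => cos (α + δ)) (-sin (α + δ)) α := by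
    simpa [Function.comp_def] using (Real.hasDerivAt_cos (α + δ)).comp α
      ((hasDerivAt_id α).add_const δ)
  have hsin : HasDerivAt (fun α : ℝ => sin (α + δ)) (cos (α + δ)) α := by
    simpa [Function.comp_def] using (Real.hasDerivAt_sin (α + δ)).comp α
      ((hasDerivAt_id α).add_const δ)
  set L : ℝ := deriv (deriv cL) α * cos (α + δ) + deriv cL α * (-sin (α + δ))
      + (deriv (deriv cD) α * sin (α + δ) + deriv cD α * cos (α + δ)) with hLdef
  have hlam : HasDerivAt lam L α := by
    simpa [lam, hLdef, Pi.mul_def, Pi.add_def] using (hcL2.mul hcos).add (hcD2.mul hsin)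
  have hlamα : lam α = deriv cL α * cos (α + δ) + deriv cD α * sin (α + δ) := rfl
  have hLbar : deriv cLbar α = deriv cL α - (L * sin (α + δ) + lam α * cos (α + δ)) := by
    have : HasDerivAt cLbar (deriv cL α - (L * sin (α + δ) + lam α * cos (α + δ))) α :=
      hcL1.sub (hlam.mul hsin)
    exact this.deriv
  have hDbar : deriv cDbar α = deriv cD α + (L * cos (α + δ) + lam α * (-sin (α + δ))) := by
    have : HasDerivAt cDbar (deriv cD α + (L * cos (α + δ) + lam α * (-sin (α + δ)))) α :=
      hcD1.add (hlam.mul hcos)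
    exact this.deriv
  have key : deriv cLbar α * cos (α + δ) + deriv cDbar α * sin (α + δ) = 0 := by
    have hpyth : sin (α + δ) ^ 2 + cos (α + δ) ^ 2 = 1 := sin_sq_add_cos_sq _
    rw [hLbar, hDbar, hlamα]
    linear_combination (-(deriv cL α * cos (α + δ) + deriv cD α * sin (α + δ))) * hpyth
  show (![0, 1] : Fin 2 → ℝ) ⬝ᵥ _ = 0
  simp only [Srot, mulVec, dotProduct, Fin.sum_univ_two, Matrix.cons_val',
    Matrix.cons_val_zero, Matrix.cons_val_one, Matrix.head_cons, Matrix.head_fin_const,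
    Pi.smul_apply, Pi.sub_apply, smul_eq_mul, Matrix.cons_val_fin_one, v,
    Matrix.of_apply, Matrix.empty_val']
  linear_combination (-(kₐ * r * r)) * key
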